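/- Let L be a real M×M matrix, U an invertible complex M×M matrix with U⁻¹·L·U = diag(0_{ξ+1}, J) where 0_{ξ+1} is the (ξ+1)×(ξ+1) zero matrix and J is any complex square matrix. For i = 1,…,ξ let v_{rᵢ} be the i-th column of U, v_{lᵢ}ᵀ the i-th row of U⁻¹ (assumed real), and let α₁,…,α_ξ > 0. Then R := L + Σᵢ₌₁^ξ αᵢ·v_{rᵢ}·v_{lᵢ}ᵀ is singular, and consequently for every symmetric positive definite real Q there is no real matrix P satisfying P·L + Lᵀ·P = Q − Σᵢ₌₁^ξ αᵢ·(P·v_{rᵢ}·v_{lᵢ}ᵀ + v_{lᵢ}·v_{rᵢ}ᵀ·P). -/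

import Mathlib

open Matrix

lemma vecMulVec_transpose' {n m : Type*} {R : Type*} [CommRing R]
    (a : m → R) (b : n → R) : (Matrix.vecMulVec a b)ᵀ = Matrix.vecMulVec b a := by
  ext i j
  simp [Matrix.vecMulVec_apply, mul_comm]

/-- Converse direction: if `L` (real, `M×M` with `M = (ξ+1) + K`) is similar over `ℂ` to
`diag(0_{ξ+1}, J)`, and for `i ≤ ξ` the vectors `v_{rᵢ}` (resp. `v_{lᵢ}ᵀ`) are the (real)
`i`-th columns of `U` (resp. rows of `U⁻¹`), then `R = L + ∑ αᵢ v_{rᵢ} v_{lᵢ}ᵀ` is singular,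
and for every symmetric positive definite `Q` the modified Lyapunov equation has no
solution `P`. -/
theorem stmt_5 (ξ K : ℕ)
    (L : Matrix (Fin (ξ + 1) ⊕ Fin K) (Fin (ξ + 1) ⊕ Fin K) ℝ)
    (U : Matrix (Fin (ξ + 1) ⊕ Fin K) (Fin (ξ + 1) ⊕ Fin K) ℂ)
    (hU : IsUnit U)
    (J : Matrix (Fin K) (Fin K) ℂ)
    (hblock : U⁻¹ * (L.map (algebraMap ℝ ℂ)) * U = Matrix.fromBlocks 0 0 0 J)
    (vr vl : Fin ξ → (Fin (ξ + 1) ⊕ Fin K) → ℝ)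
    (hvr : ∀ i j, (vr i j : ℂ) = U j (Sum.inl (Fin.castSucc i)))
    (hvl : ∀ i j, (vl i j : ℂ) = U⁻¹ (Sum.inl (Fin.castSucc i)) j)
    (α : Fin ξ → ℝ) (hα : ∀ i, 0 < α i) :
    (∃ x : (Fin (ξ + 1) ⊕ Fin K) → ℝ, x ≠ 0 ∧
        (L + ∑ i : Fin ξ, α i • Matrix.vecMulVec (vr i) (vl i)) *ᵥ x = 0) ∧
    (∀ Q : Matrix (Fin (ξ + 1) ⊕ Fin K) (Fin (ξ + 1) ⊕ Fin K) ℝ, Q.PosDef →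
        ¬ ∃ P : Matrix (Fin (ξ + 1) ⊕ Fin K) (Fin (ξ + 1) ⊕ Fin K) ℝ,
          P * L + Lᵀ * P =
            Q - ∑ i : Fin ξ, α i •
              (P * Matrix.vecMulVec (vr i) (vl i) + Matrix.vecMulVec (vl i) (vr i) * P)) := by
  set S : Matrix (Fin (ξ + 1) ⊕ Fin K) (Fin (ξ + 1) ⊕ Fin K) ℝ :=
    ∑ i : Fin ξ, α i • Matrix.vecMulVec (vr i) (vl i) with hSdef
  set Rm : Matrix (Fin (ξ + 1) ⊕ Fin K) (Fin (ξ + 1) ⊕ Fin K) ℝ := L + S with hRdef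
  have hdet : IsUnit U.det := (Matrix.isUnit_iff_isUnit_det U).mp hU
  have hUU : U * U⁻¹ = 1 := Matrix.mul_nonsing_inv U hdet
  have hUU' : U⁻¹ * U = 1 := Matrix.nonsing_inv_mul U hdet
  -- the (ξ+1)-th column of U
  set u : (Fin (ξ + 1) ⊕ Fin K) → ℂ := fun j => U j (Sum.inl (Fin.last ξ)) with hudef
  have hLU : L.map (algebraMap ℝ ℂ) * U = U * Matrix.fromBlocks 0 0 0 J := by
    rw [← hblock, ← Matrix.mul_assoc, ← Matrix.mul_assoc, hUU, one_mul]
  have hfb : ∀ k : Fin (ξ + 1) ⊕ Fin K,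
      (Matrix.fromBlocks (0 : Matrix (Fin (ξ+1)) (Fin (ξ+1)) ℂ) 0 0 J)
      k (Sum.inl (Fin.last ξ)) = 0 := by
    rintro (a | b) <;> simp
  have hLu : ∀ j, ∑ k, (L j k : ℂ) * u k = 0 := by
    intro j
    have h1 : (L.map (algebraMap ℝ ℂ) * U) j (Sum.inl (Fin.last ξ)) = 0 := by
      rw [hLU, Matrix.mul_apply]
      simp [hfb]
    rw [Matrix.mul_apply] at h1
    simpa [Matrix.map_apply] using h1
  have hvlu : ∀ i : Fin ξ, ∑ k, (vl i k : ℂ) * u k = 0 := by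
    intro i
    have h1 : (U⁻¹ * U) (Sum.inl (Fin.castSucc i)) (Sum.inl (Fin.last ξ)) = 0 := by
      rw [hUU']
      have : (Fin.castSucc i) ≠ Fin.last ξ := (Fin.castSucc_lt_last i).ne
      simp [Matrix.one_apply, this]
    rw [Matrix.mul_apply] at h1
    calc ∑ k, (vl i k : ℂ) * u k
        = ∑ k, U⁻¹ (Sum.inl (Fin.castSucc i)) k * U k (Sum.inl (Fin.last ξ)) := by
          refine Finset.sum_congr rfl fun k _ => ?_
          rw [hvl]
      _ = 0 := h1
  -- the complex column is in the kernel of R (over ℂ)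
  have hRu : ∀ j, ∑ k, (Rm j k : ℂ) * u k = 0 := by
    intro j
    have hexp : ∀ k, (Rm j k : ℂ) = (L j k : ℂ) + ∑ i, (α i : ℂ) * ((vr i j : ℂ) * (vl i k : ℂ)) := by
      intro k
      simp only [hRdef, hSdef, Matrix.add_apply, Matrix.sum_apply, Matrix.smul_apply,
        Matrix.vecMulVec_apply, smul_eq_mul]
      push_cast
      ring
    calc ∑ k, (Rm j k : ℂ) * u k
        = ∑ k, ((L j k : ℂ) * u k + ∑ i, (α i : ℂ) * (vr i j : ℂ) * ((vl i k : ℂ) * u k)) := by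
          refine Finset.sum_congr rfl fun k _ => ?_
          rw [hexp, add_mul, Finset.sum_mul]
          congr 1
          refine Finset.sum_congr rfl fun i _ => ?_
          ring
      _ = (∑ k, (L j k : ℂ) * u k) +
            ∑ i, (α i : ℂ) * (vr i j : ℂ) * (∑ k, (vl i k : ℂ) * u k) := by
          rw [Finset.sum_add_distrib]
          congr 1
          rw [Finset.sum_comm]
          refine Finset.sum_congr rfl fun i _ => ?_
          rw [Finset.mul_sum]
      _ = 0 := by
          rw [hLu j]
          simp [hvlu]
  have hRre : Rm *ᵥ (fun k => (u k).re) = 0 := by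
    funext j
    have := congrArg Complex.re (hRu j)
    simpa [Matrix.mulVec, dotProduct, Complex.re_sum] using this
  have hRim : Rm *ᵥ (fun k => (u k).im) = 0 := by
    funext j
    have := congrArg Complex.im (hRu j)
    simpa [Matrix.mulVec, dotProduct, Complex.im_sum] using this
  have hune : u ≠ 0 := by
    intro h0
    have h1 : (U⁻¹ * U) (Sum.inl (Fin.last ξ)) (Sum.inl (Fin.last ξ)) = 1 := by
      rw [hUU']; simp
    rw [Matrix.mul_apply] at h1
    have hz : ∑ k, U⁻¹ (Sum.inl (Fin.last ξ)) k * U k (Sum.inl (Fin.last ξ)) = 0 := by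
      refine Finset.sum_eq_zero fun k _ => ?_
      have : u k = 0 := congrFun h0 k
      rw [hudef] at this
      simp only at this
      simp [this]
    rw [hz] at h1
    exact one_ne_zero h1.symm
  -- extract a nonzero real kernel vector
  have hker : ∃ x : (Fin (ξ + 1) ⊕ Fin K) → ℝ, x ≠ 0 ∧ Rm *ᵥ x = 0 := by
    by_cases hre : (fun k => (u k).re) = (0 : (Fin (ξ + 1) ⊕ Fin K) → ℝ)
    · refine ⟨fun k => (u k).im, ?_, hRim⟩
      intro h0
      apply hune
      funext k
      have h1 : (u k).re = 0 := congrFun hre k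
      have h2 : (u k).im = 0 := congrFun h0 k
      exact Complex.ext h1 h2
    · exact ⟨fun k => (u k).re, hre, hRre⟩
  refine ⟨hker, ?_⟩
  rintro Q hQ ⟨P, hP⟩
  obtain ⟨x, hx, hRx⟩ := hker
  -- rewrite the Lyapunov equation as P R + Rᵀ P = Q
  have hST : Sᵀ = ∑ i : Fin ξ, α i • Matrix.vecMulVec (vl i) (vr i) := by
    rw [hSdef, Matrix.transpose_sum]
    refine Finset.sum_congr rfl fun i _ => ?_
    rw [Matrix.transpose_smul, vecMulVec_transpose']
  have hS : ∑ i : Fin ξ, α i •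
      (P * Matrix.vecMulVec (vr i) (vl i) + Matrix.vecMulVec (vl i) (vr i) * P)
      = P * S + Sᵀ * P := by
    rw [hST, hSdef, Finset.mul_sum, Finset.sum_mul, ← Finset.sum_add_distrib]
    refine Finset.sum_congr rfl fun i _ => ?_
    rw [smul_add, Matrix.mul_smul, Matrix.smul_mul]
  have hPQ : P * Rm + Rmᵀ * P = Q := by
    have hexp : P * Rm + Rmᵀ * P = (P * L + Lᵀ * P) + (P * S + Sᵀ * P) := by
      rw [hRdef, Matrix.transpose_add, Matrix.mul_add, Matrix.add_mul]
      abel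
    rw [hexp, hP, ← hS]
    abel
  have h1 : x ⬝ᵥ ((P * Rm) *ᵥ x) = 0 := by
    rw [← Matrix.mulVec_mulVec, hRx, Matrix.mulVec_zero, dotProduct_zero]
  have h2 : x ⬝ᵥ ((Rmᵀ * P) *ᵥ x) = 0 := by
    rw [← Matrix.mulVec_mulVec, Matrix.dotProduct_mulVec, Matrix.vecMul_transpose, hRx,
      zero_dotProduct]
  have hxQx : x ⬝ᵥ Q *ᵥ x = 0 := by
    rw [← hPQ, Matrix.add_mulVec, dotProduct_add, h1, h2, add_zero]
  have hpos := hQ.dotProduct_mulVec_pos hx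
  have hsx : star x = x := by
    funext k; exact star_trivial _
  rw [hsx, hxQx] at hpos
  exact lt_irrefl 0 hpos
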